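/- Suppose g : ℝ → ℝ is C¹ with g(0)=0 and satisfies the dissipativity condition liminf_{|r|→∞} (g(r)r + (λ₁ − κ)r²) > 0 for some κ > 0, where λ₁ = inf_{v≠0} ‖v‖²_{X_{σ0}}/‖v‖²_{L²(Ω)} > 0. Then its primitive ĝ satisfies ∫_Ω ĝ(u) dx ≥ −((λ₁−κ)/2)‖u‖²_{L²(Ω)} − C for some constant C ≥ 0 and all admissible u, and hence the energy E_σ(v) = (1/2)‖v‖²_{X_{σ0}} + ∫_Ω ĝ(v) dx satisfies the coercivity bound E_σ(v) ≥ κ₀ ‖v‖²_{X_{σ0}} − C with κ₀ = κ/(2λ₁), for all v ∈ X_{σ0}. -/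

import Mathlib

open MeasureTheory Filter

/-- Dissipativity implies the lower bound `∫ G(u) ≥ -((lam1-κ)/2)‖u‖²_{L²} - C` and the
coercivity `E_σ(v) ≥ κ₀ ‖v‖²_{X_{σ0}} - C`, `κ₀ = κ/(2lam1)`.  Here `Ω` is modelled by a
finite measure space, `A` is the class of admissible functions (membership in `X_{σ0}`),
`Q v = ‖v‖²_{X_{σ0}}` is the squared Gagliardo norm, and `lam1 > 0` is the first
eigenvalue, i.e. `lam1 ∫ v² ≤ Q v` for admissible `v`. -/
theorem energy_coercivity {α : Type*} [MeasurableSpace α] (μ : Measure α)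
    [IsFiniteMeasure μ]
    (g G : ℝ → ℝ) (hgcont : Continuous g) (hg0 : g 0 = 0)
    (hprim : ∀ r : ℝ, HasDerivAt G (g r) r)
    (A : (α → ℝ) → Prop)            -- admissible class (v ∈ X_{σ0})
    (Q : (α → ℝ) → ℝ)               -- squared X_{σ0}-norm
    (hQ : ∀ v, A v → 0 ≤ Q v)
    (lam1 κ : ℝ) (hlam1 : 0 < lam1) (hκ : 0 < κ) (hkl : κ ≤ lam1)
    (hpoin : ∀ v, A v → lam1 * ∫ x, (v x) ^ 2 ∂μ ≤ Q v)
    -- dissipativity: liminf_{|r|→∞} (g(r) r + (lam1 - κ) r²) > 0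
    (hdiss : ∃ ε : ℝ, 0 < ε ∧ ∀ᶠ r in cocompact ℝ, ε ≤ g r * r + (lam1 - κ) * r ^ 2) :
    ∃ C : ℝ, 0 ≤ C ∧ ∀ u : α → ℝ, A u →
      Integrable (fun x => G (u x)) μ → Integrable (fun x => (u x) ^ 2) μ →
      (-((lam1 - κ) / 2) * ∫ x, (u x) ^ 2 ∂μ - C ≤ ∫ x, G (u x) ∂μ) ∧
      ((κ / (2 * lam1)) * Q u - C ≤ (1 / 2) * Q u + ∫ x, G (u x) ∂μ) := by
  obtain ⟨ε, hε, hev⟩ := hdiss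
  set a : ℝ := (lam1 - κ) / 2 with ha
  have ha0 : 0 ≤ a := div_nonneg (sub_nonneg.2 hkl) (by norm_num)
  set H : ℝ → ℝ := fun r => G r + a * r ^ 2 with hHdef
  have hHd : ∀ r, HasDerivAt H (g r + (lam1 - κ) * r) r := by
    intro r
    have h2 : HasDerivAt (fun r : ℝ => a * r ^ 2) (a * (2 * r)) r := by
      simpa using ((hasDerivAt_pow 2 r).const_mul a)
    have := (hprim r).add h2
    have e : g r + (lam1 - κ) * r = g r + a * (2 * r) := by rw [ha]; ring
    rw [e]; exact this
  have hHdiff : Differentiable ℝ H := fun r => (hHd r).differentiableAt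
  have hHderiv : ∀ r, deriv H r = g r + (lam1 - κ) * r := fun r => (hHd r).deriv
  -- extract radius R from the cocompact eventually
  obtain ⟨K, hKc, hKs⟩ := (hasBasis_cocompact.eventually_iff).mp hev
  obtain ⟨R0, hR0⟩ := hKc.isBounded.subset_closedBall 0
  set R : ℝ := max R0 1 with hRdef
  have hR1 : (1 : ℝ) ≤ R := le_max_right _ _
  have hRpos : (0 : ℝ) < R := lt_of_lt_of_le one_pos hR1
  have key : ∀ r : ℝ, R < |r| → ε ≤ g r * r + (lam1 - κ) * r ^ 2 := by
    intro r hr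
    apply hKs
    intro hrK
    have h1 := hR0 hrK
    have h2 : |r| ≤ R0 := by simpa [Real.dist_eq] using h1
    have : |r| ≤ R := le_trans h2 (le_max_left _ _)
    linarith
  -- monotonicity on [R, ∞)
  have hmono : StrictMonoOn H (Set.Ici R) := by
    apply strictMonoOn_of_deriv_pos (convex_Ici R) hHdiff.continuous.continuousOn
    intro r hr
    rw [interior_Ici] at hr
    have hrR : R < r := hr
    have hrpos : 0 < r := lt_trans hRpos hrR
    have hk := key r (by rwa [abs_of_pos hrpos])
    rw [hHderiv]
    nlinarith
  have hanti : StrictAntiOn H (Set.Iic (-R)) := by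
    apply strictAntiOn_of_deriv_neg (convex_Iic (-R)) hHdiff.continuous.continuousOn
    intro r hr
    rw [interior_Iic] at hr
    have hrR : r < -R := hr
    have hrneg : r < 0 := lt_trans hrR (by linarith)
    have hk := key r (by rw [abs_of_neg hrneg]; linarith)
    rw [hHderiv]
    nlinarith
  -- minimum on the compact core
  obtain ⟨r₀, hr₀mem, hr₀min⟩ := (isCompact_Icc (a := -R) (b := R)).exists_isMinOn
    ⟨0, by constructor <;> linarith⟩ hHdiff.continuous.continuousOn
  set c : ℝ := H r₀ with hcdef
  have hglobal : ∀ r : ℝ, c ≤ H r := by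
    intro r
    rcases le_or_gt r (-R) with h | h
    · have h1 : H (-R) ≤ H r := by
        rcases h.lt_or_eq with h' | h'
        · exact (hanti h (le_refl (-R)) h').le
        · rw [h']
      have h2 : c ≤ H (-R) := hr₀min ⟨le_refl _, by linarith⟩
      linarith
    rcases le_or_gt R r with h' | h'
    · have h1 : H R ≤ H r := by
        rcases eq_or_lt_of_le h' with rfl | h''
        · exact le_refl _
        · exact (hmono (Set.mem_Ici.2 (le_refl R)) h' h'').le
      have h2 : c ≤ H R := hr₀min ⟨by linarith, le_refl _⟩
      linarith
    · exact hr₀min ⟨h.le, h'.le⟩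
  set m : ℝ := (μ Set.univ).toReal with hmdef
  have hm0 : 0 ≤ m := ENNReal.toReal_nonneg
  refine ⟨max (-(c * m)) 0, le_max_right _ _, ?_⟩
  intro u hAu hGint hsqint
  have hsqnn : 0 ≤ ∫ x, (u x) ^ 2 ∂μ := integral_nonneg fun x => sq_nonneg _
  have hfint : Integrable (fun x => G (u x) + a * (u x) ^ 2) μ :=
    hGint.add (hsqint.const_mul a)
  have hlow : c * m ≤ ∫ x, (G (u x) + a * (u x) ^ 2) ∂μ := by
    have := integral_mono (integrable_const c) hfint (fun x => hglobal (u x))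
    simpa [mul_comm, hmdef, Measure.real] using this
  have hsplit : ∫ x, (G (u x) + a * (u x) ^ 2) ∂μ
      = (∫ x, G (u x) ∂μ) + a * ∫ x, (u x) ^ 2 ∂μ := by
    rw [integral_add hGint (hsqint.const_mul a), integral_const_mul a _]
  rw [hsplit] at hlow
  have hC : -(max (-(c * m)) 0) ≤ c * m := by
    rcases le_total (-(c * m)) 0 with h | h
    · rw [max_eq_right h]; linarith
    · rw [max_eq_left h]; linarith
  have first : -((lam1 - κ) / 2) * ∫ x, (u x) ^ 2 ∂μ - max (-(c * m)) 0
      ≤ ∫ x, G (u x) ∂μ := by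
    rw [← ha]; linarith
  refine ⟨first, ?_⟩
  have hpq := hpoin u hAu
  have hq0 := hQ u hAu
  have hfrac : (κ / (2 * lam1)) * Q u ≤ (1 / 2) * Q u - a * ∫ x, (u x) ^ 2 ∂μ := by
    rw [div_mul_eq_mul_div, div_le_iff₀ (by positivity)]
    rw [ha]
    nlinarith [mul_le_mul_of_nonneg_left hpq (sub_nonneg.2 hkl)]
  linarith
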